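/- For ρ ∈ (−1, 1) let μ_ρ be the Borel probability measure on ℝ² with density (x, y) ↦ (2π√(1−ρ²))⁻¹ exp(−(x² − 2ρxy + y²)/(2(1−ρ²))) with respect to two-dimensional Lebesgue measure (the centered bivariate Gaussian law with unit variances and correlation ρ). Then μ_ρ({(x, y) ∈ ℝ² : x > 0 and y > 0}) = 1/4 + arcsin(ρ)/(2π). -/

import Mathlib

open MeasureTheory

open scoped ENNReal

section SheppardAux

open Real Set

/-- The integral of `x ↦ x e^{-x²/2}` over `(0, ∞)` equals `1`. -/
lemma sheppard_radial_int : ∫ x in Ioi (0:ℝ), x * Real.exp (-(1/2) * x ^ 2) = 1 := by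
  have h := integral_Ioi_of_hasDerivAt_of_tendsto'
    (f := fun x : ℝ => -Real.exp (-(1/2) * x ^ 2))
    (f' := fun x : ℝ => x * Real.exp (-(1/2) * x ^ 2)) (a := 0) (m := 0)
    (fun x _ => by
      have h2 : HasDerivAt (fun x : ℝ => -Real.exp (-(1/2) * x ^ 2))
          (-(Real.exp (-(1/2) * x ^ 2) * (-(1/2) * (2 * x ^ 1)))) x :=
        (((hasDerivAt_pow 2 x).const_mul (-(1/2))).exp).neg
      refine h2.congr_deriv ?_
      ring)
    ((integrable_mul_exp_neg_mul_sq (by norm_num : (0:ℝ) < 1/2)).integrableOn)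
    ?_
  · rw [h]; simp
  · have h1 : Filter.Tendsto (fun x : ℝ => -(1/2) * x ^ 2) Filter.atTop Filter.atBot := by
      apply Filter.Tendsto.const_mul_atTop_of_neg (by norm_num : (-(1/2):ℝ) < 0)
      exact Filter.tendsto_pow_atTop two_ne_zero
    have := (Real.tendsto_exp_atBot.comp h1).neg
    simpa using this

/-- Characterization of the cone `{x > 0, ρx + √(1-ρ²)y > 0}` in polar coordinates. -/
lemma sheppard_cone_iff {ρ : ℝ} (hρ₁ : -1 < ρ) (hρ₂ : ρ < 1) {r θ : ℝ} (hr : 0 < r)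
    (hθ : θ ∈ Ioo (-π) π) :
    (0 < r * Real.cos θ ∧ 0 < ρ * (r * Real.cos θ) + Real.sqrt (1 - ρ ^ 2) * (r * Real.sin θ))
      ↔ θ ∈ Ioo (-Real.arcsin ρ) (π / 2) := by
  have hα₁ : -(π/2) < Real.arcsin ρ := Real.neg_pi_div_two_lt_arcsin.2 hρ₁
  have hα₂ : Real.arcsin ρ < π/2 := Real.arcsin_lt_pi_div_two.2 hρ₂
  have hsin : Real.sin (Real.arcsin ρ) = ρ := Real.sin_arcsin hρ₁.le hρ₂.le
  have hcos : Real.cos (Real.arcsin ρ) = Real.sqrt (1 - ρ ^ 2) := Real.cos_arcsin ρ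
  have key : ρ * (r * Real.cos θ) + Real.sqrt (1 - ρ ^ 2) * (r * Real.sin θ)
      = r * Real.sin (θ + Real.arcsin ρ) := by
    rw [Real.sin_add, hsin, hcos]; ring
  obtain ⟨hθl, hθr⟩ := hθ
  rw [key]
  constructor
  · rintro ⟨h1, h2⟩
    have hc : 0 < Real.cos θ := by nlinarith
    have hs : 0 < Real.sin (θ + Real.arcsin ρ) := by nlinarith
    have hθ2 : θ < π / 2 := by
      by_contra h
      push_neg at h
      have := Real.cos_nonpos_of_pi_div_two_le_of_le h (by nlinarith [Real.pi_pos])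
      linarith
    have hθ1 : -(π/2) < θ := by
      by_contra h
      push_neg at h
      have : Real.cos (-θ) ≤ 0 :=
        Real.cos_nonpos_of_pi_div_two_le_of_le (by linarith) (by nlinarith [Real.pi_pos])
      rw [Real.cos_neg] at this
      linarith
    have : -Real.arcsin ρ < θ := by
      by_contra h
      push_neg at h
      have : Real.sin (θ + Real.arcsin ρ) ≤ 0 :=
        Real.sin_nonpos_of_nonpos_of_neg_pi_le (by linarith) (by linarith)
      linarith
    exact ⟨this, hθ2⟩
  · rintro ⟨h1, h2⟩
    have hc : 0 < Real.cos θ := Real.cos_pos_of_mem_Ioo ⟨by linarith, h2⟩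
    have hs : 0 < Real.sin (θ + Real.arcsin ρ) :=
      Real.sin_pos_of_pos_of_lt_pi (by linarith) (by linarith)
    exact ⟨by positivity, by positivity⟩

end SheppardAux

/-- The centered bivariate Gaussian measure on `ℝ²` with unit variances and correlation `ρ`,
given by its density with respect to two-dimensional Lebesgue measure. -/
noncomputable def biGauss (ρ : ℝ) : Measure (ℝ × ℝ) :=
  (volume : Measure (ℝ × ℝ)).withDensity fun p =>
    ENNReal.ofReal ((2 * Real.pi * Real.sqrt (1 - ρ ^ 2))⁻¹ *
      Real.exp (-(p.1 ^ 2 - 2 * ρ * p.1 * p.2 + p.2 ^ 2) / (2 * (1 - ρ ^ 2))))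

/-- Sheppard's formula: for a centered bivariate Gaussian vector with unit variances and
correlation `ρ ∈ (−1, 1)`, the probability of the positive quadrant equals
`1/4 + arcsin(ρ)/(2π)`. -/
theorem stmt17 (ρ : ℝ) (hρ₁ : -1 < ρ) (hρ₂ : ρ < 1) :
    biGauss ρ {p : ℝ × ℝ | 0 < p.1 ∧ 0 < p.2} =
      ENNReal.ofReal (1 / 4 + Real.arcsin ρ / (2 * Real.pi)) := by
  open Real Set in
  have h1ρ : 0 < 1 - ρ^2 := by nlinarith
  have hα₁ : -(π/2) < Real.arcsin ρ := Real.neg_pi_div_two_lt_arcsin.2 hρ₁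
  have hα₂ : Real.arcsin ρ < π/2 := Real.arcsin_lt_pi_div_two.2 hρ₂
  have hπ : (0:ℝ) < π := Real.pi_pos
  set c := Real.sqrt (1 - ρ^2) with hc_def
  have hc : 0 < c := Real.sqrt_pos.2 h1ρ
  have hc2 : c^2 = 1 - ρ^2 := Real.sq_sqrt h1ρ.le
  set L : ℝ × ℝ →ₗ[ℝ] ℝ × ℝ :=
    Matrix.toLin (Module.Basis.finTwoProd ℝ) (Module.Basis.finTwoProd ℝ) !![1, 0; ρ, c] with hL_def
  have hLdet : LinearMap.det L = c := by
    rw [hL_def, LinearMap.det_toLin]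
    simp [Matrix.det_fin_two_of]
  have hLapp : ∀ q : ℝ × ℝ, L q = (1 * q.1 + 0 * q.2, ρ * q.1 + c * q.2) :=
    fun q => Matrix.toLin_finTwoProd_apply 1 0 ρ c q
  have hLmeas : Measurable L := L.continuous_of_finiteDimensional.measurable
  have hmap : Measure.map L (volume : Measure (ℝ × ℝ))
      = ENNReal.ofReal c⁻¹ • volume := by
    rw [Measure.map_linearMap_addHaar_eq_smul_addHaar volume (by rw [hLdet]; exact hc.ne'),
      hLdet, abs_of_pos (by positivity)]
  set S : Set (ℝ × ℝ) := {p : ℝ × ℝ | 0 < p.1 ∧ 0 < p.2} with hS_def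
  have hS : MeasurableSet S :=
    (measurableSet_lt measurable_const measurable_fst).inter
      (measurableSet_lt measurable_const measurable_snd)
  set D : ℝ × ℝ → ℝ≥0∞ := fun p =>
    ENNReal.ofReal ((2 * Real.pi * c)⁻¹ *
      Real.exp (-(p.1 ^ 2 - 2 * ρ * p.1 * p.2 + p.2 ^ 2) / (2 * (1 - ρ ^ 2)))) with hD_def
  have hD : Measurable D := by
    apply ENNReal.measurable_ofReal.comp
    fun_prop
  have step1 : biGauss ρ S = ∫⁻ p, S.indicator D p ∂volume := by
    rw [biGauss, withDensity_apply _ hS, ← lintegral_indicator hS]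
  have step2 : ∫⁻ p, S.indicator D p ∂volume
      = ENNReal.ofReal c * ∫⁻ q, S.indicator D (L q) ∂volume := by
    rw [← lintegral_map (hD.indicator hS) hLmeas, hmap, lintegral_smul_measure, smul_eq_mul,
      ← mul_assoc, ← ENNReal.ofReal_mul hc.le, mul_inv_cancel₀ hc.ne', ENNReal.ofReal_one,
      one_mul]
  have hfun : ∀ q : ℝ × ℝ, (q.1, ρ * q.1 + c * q.2) = L q := by
    intro q; rw [hLapp]; simp
  have hCset : (fun q : ℝ × ℝ => (q.1, ρ * q.1 + c * q.2)) ⁻¹' S = L ⁻¹' S := by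
    ext q; rw [Set.mem_preimage, Set.mem_preimage, hfun]
  have step3 : ENNReal.ofReal c * ∫⁻ q, S.indicator D (L q) ∂volume
      = ∫⁻ q in L ⁻¹' S, ENNReal.ofReal ((2 * π)⁻¹ * Real.exp (-(1/2) * (q.1 ^ 2 + q.2 ^ 2)))
        ∂volume := by
    rw [← lintegral_indicator (hS.preimage hLmeas),
      ← lintegral_const_mul _ (show Measurable fun q => S.indicator D (L q) from
        (hD.indicator hS).comp hLmeas)]
    apply lintegral_congr
    intro q
    by_cases hq : q ∈ L ⁻¹' S
    · rw [Set.indicator_of_mem hq, Set.indicator_of_mem (Set.mem_preimage.1 hq),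
        ← ENNReal.ofReal_mul hc.le]
      congr 1
      simp only [hLapp]
      have hexp : -((1 * q.1 + 0 * q.2) ^ 2 - 2 * ρ * (1 * q.1 + 0 * q.2) *
          (ρ * q.1 + c * q.2) + (ρ * q.1 + c * q.2) ^ 2) / (2 * (1 - ρ ^ 2))
          = -(1/2) * (q.1 ^ 2 + q.2 ^ 2) := by
        rw [div_eq_iff (by positivity : (2 * (1 - ρ ^ 2)) ≠ 0)]
        linear_combination (-(q.2^2)) * hc2
      rw [hexp]
      field_simp
    · have hq' : L q ∉ S := hq
      rw [Set.indicator_of_notMem hq', mul_zero, Set.indicator_of_notMem hq]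
  rw [step1, step2, step3, ← hCset]
  -- it remains to compute the standard Gaussian measure of the cone, via polar coordinates
  set C : Set (ℝ × ℝ) := (fun q : ℝ × ℝ => (q.1, ρ * q.1 + c * q.2)) ⁻¹' S with hC_def2
  have hCmeas : MeasurableSet C := by rw [hCset]; exact hS.preimage hLmeas
  set std : ℝ × ℝ → ℝ := fun q => (2 * π)⁻¹ * Real.exp (-(1/2) * (q.1 ^ 2 + q.2 ^ 2))
    with hstd_def
  have hint : Integrable std volume := by
    have h1 : Integrable (fun x : ℝ => (2*π)⁻¹ * Real.exp (-(1/2) * x ^ 2)) volume :=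
      (integrable_exp_neg_mul_sq (by norm_num : (0:ℝ) < 1/2)).const_mul _
    have h2 : Integrable (fun x : ℝ => Real.exp (-(1/2) * x ^ 2)) volume :=
      integrable_exp_neg_mul_sq (by norm_num : (0:ℝ) < 1/2)
    have h3 := h1.mul_prod h2
    rw [← Measure.volume_eq_prod] at h3
    refine h3.congr (Filter.Eventually.of_forall fun z => ?_)
    rw [hstd_def]
    simp only
    rw [mul_assoc, ← Real.exp_add]
    congr 2
    ring
  rw [← ofReal_integral_eq_lintegral_ofReal hint.integrableOn
    (Filter.Eventually.of_forall fun q => by positivity)]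
  congr 1
  rw [← integral_indicator hCmeas, ← integral_comp_polarCoord_symm (C.indicator std)]
  have htarget : MeasurableSet polarCoord.target :=
    measurableSet_Ioi.prod measurableSet_Ioo
  have heq : Set.EqOn (fun p : ℝ × ℝ => p.1 • (C.indicator std) (polarCoord.symm p))
      (fun p : ℝ × ℝ => (Ioi (0:ℝ) ×ˢ Ioo (-Real.arcsin ρ) (π/2)).indicator
        (fun p : ℝ × ℝ => (p.1 * Real.exp (-(1/2) * p.1 ^ 2)) * (2 * π)⁻¹) p)
      polarCoord.target := by
    intro p hp
    obtain ⟨hr, hθ⟩ := hp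
    simp only [Set.mem_Ioi] at hr
    have hsymm : polarCoord.symm p = (p.1 * Real.cos p.2, p.1 * Real.sin p.2) := rfl
    by_cases hmem : p.2 ∈ Ioo (-Real.arcsin ρ) (π/2)
    · have hCm : polarCoord.symm p ∈ C := by
        rw [hC_def2, Set.mem_preimage, hsymm]
        exact (sheppard_cone_iff hρ₁ hρ₂ hr hθ).2 hmem
      have hpm : p ∈ Ioi (0:ℝ) ×ˢ Ioo (-Real.arcsin ρ) (π/2) := ⟨hr, hmem⟩
      simp only [Set.indicator_of_mem hCm, Set.indicator_of_mem hpm]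
      rw [hstd_def, hsymm]
      simp only [smul_eq_mul]
      have hexp : (p.1 * Real.cos p.2) ^ 2 + (p.1 * Real.sin p.2) ^ 2 = p.1 ^ 2 := by
        linear_combination p.1 ^ 2 * Real.sin_sq_add_cos_sq p.2
      rw [hexp]
      ring
    · have hCm : polarCoord.symm p ∉ C := by
        rw [hC_def2, Set.mem_preimage, hsymm]
        intro h
        exact hmem ((sheppard_cone_iff hρ₁ hρ₂ hr hθ).1 h)
      have hpm : p ∉ Ioi (0:ℝ) ×ˢ Ioo (-Real.arcsin ρ) (π/2) := fun h => hmem h.2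
      simp only [Set.indicator_of_notMem hCm, Set.indicator_of_notMem hpm, smul_zero]
  rw [setIntegral_congr_fun htarget heq]
  have hsub : Ioi (0:ℝ) ×ˢ Ioo (-Real.arcsin ρ) (π/2) ⊆ polarCoord.target :=
    Set.prod_mono subset_rfl (Set.Ioo_subset_Ioo (by linarith) (by linarith))
  rw [setIntegral_indicator (measurableSet_Ioi.prod measurableSet_Ioo),
    Set.inter_eq_self_of_subset_right hsub, Measure.volume_eq_prod,
    setIntegral_prod_mul (fun r : ℝ => r * Real.exp (-(1/2) * r ^ 2)) (fun _ : ℝ => (2 * π)⁻¹),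
    sheppard_radial_int, setIntegral_const, Real.volume_real_Ioo_of_le (by linarith), smul_eq_mul]
  field_simp
  ring
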